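/- Let A be a commutative ring, a₁,…,a_n ∈ A, φ(t) = ∏(t−a_i), and define φ⁺_{m,i}(t) = φ(t)^m(t−a₁)⋯(t−a_i), φ⁻_{m,j}(t) = φ(t)^m(t−a_{n−j+1})⋯(t−a_n) for m ∈ ℤ, 0 ≤ i,j ≤ n−1, viewed in the localization A[t,φ^{-1}]. Let Res : A[t,φ^{-1}]dt → A denote the total residue (sum of formal residues at a₁,…,a_n, defined via completion). Then Res(φ⁺_{a,i}·φ⁻_{b,j} dt) = δ_{a+b,−1}·δ_{i+j,n−1}, and Res(φ⁻_{c,i}·φ⁻_{d,j} dt) = 0 for all c,d < 0. -/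

import Mathlib

open Polynomial

namespace Stmt4

variable (n : ℕ) (a : ℕ → ℂ)

/-- `φ(t) = ∏_{j<n} (t - a j)` as a rational function. -/
noncomputable def phi : RatFunc ℂ :=
  ∏ j ∈ Finset.range n, (RatFunc.X - RatFunc.C (a j))

/-- `φ⁺_{m,i}(t) = φ(t)^m (t-a 0)⋯(t-a (i-1))`, for `m ∈ ℤ`. -/
noncomputable def phiPlus (m : ℤ) (i : ℕ) : RatFunc ℂ :=
  phi n a ^ m * ∏ j ∈ Finset.range i, (RatFunc.X - RatFunc.C (a j))

/-- `φ⁻_{m,j}(t) = φ(t)^m (t-a (n-j))⋯(t-a (n-1))`, for `m ∈ ℤ`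
(the last `j` linear factors). -/
noncomputable def phiMinus (m : ℤ) (j : ℕ) : RatFunc ℂ :=
  phi n a ^ m * ∏ k ∈ Finset.Ico (n - j) n, (RatFunc.X - RatFunc.C (a k))

/-- The total residue `Res(f dt)`: the sum of the residues of `f dt` at the
points `a 0, …, a (n-1)` (coefficient of `(t - a i)⁻¹` in the Laurent
expansion at `a i`). -/
noncomputable def Res (f : RatFunc ℂ) : ℂ :=
  ∑ i ∈ Finset.range n, ((RatFunc.laurent (a i) f : RatFunc ℂ) : LaurentSeries ℂ).coeff (-1)

noncomputable section

local notation "εp" => algebraMap (Polynomial ℂ) (RatFunc ℂ)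


/-- The residue of a rational function at a point `b`. -/
def resAt (b : ℂ) (f : RatFunc ℂ) : ℂ :=
  ((RatFunc.laurent b f : RatFunc ℂ) : LaurentSeries ℂ).coeff (-1)

lemma coeAlgHom_algebraMap (P : ℂ[X]) :
    ((εp P : RatFunc ℂ) : LaurentSeries ℂ) = ((P : PowerSeries ℂ) : LaurentSeries ℂ) := by
  rw [RatFunc.coe_coe]
  rfl

lemma taylor_pow (b : ℂ) (P : ℂ[X]) (s : ℕ) : taylor b (P ^ s) = (taylor b P) ^ s := by
  simp [taylor_apply, pow_comp]

lemma taylor_X_sub_C (b : ℂ) : taylor b (X - C b) = X := by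
  simp [taylor_apply, sub_comp]

lemma taylor_derivative (b : ℂ) (P : ℂ[X]) :
    taylor b (derivative P) = derivative (taylor b P) := by
  simp [taylor_apply, derivative_comp]

lemma constantCoeff_taylor (b : ℂ) (Q : ℂ[X]) :
    PowerSeries.constantCoeff ((taylor b Q : ℂ[X]) : PowerSeries ℂ) = Q.eval b := by
  rw [← PowerSeries.coeff_zero_eq_constantCoeff_apply, Polynomial.coeff_coe, taylor_coeff_zero]

/-- Key computation: residue of `P / ((X-b)^s * Q)` at `b`, when `Q(b) ≠ 0`. -/
lemma resAt_shape (b : ℂ) (P Q : ℂ[X]) (s : ℕ) (hQ : Q.eval b ≠ 0) :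
    resAt b (εp P / εp ((X - C b) ^ s * Q)) =
      if s = 0 then 0 else
        PowerSeries.coeff (s - 1)
          (((taylor b P : ℂ[X]) : PowerSeries ℂ) * ((taylor b Q : ℂ[X]) : PowerSeries ℂ)⁻¹) := by
  have hQ0 : PowerSeries.constantCoeff ((taylor b Q : ℂ[X]) : PowerSeries ℂ) = Q.eval b :=
    constantCoeff_taylor b Q
  set Qs : PowerSeries ℂ := ((taylor b Q : ℂ[X]) : PowerSeries ℂ) with hQs
  have hQs0 : PowerSeries.constantCoeff Qs ≠ 0 := by rw [hQ0]; exact hQ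
  have hQsu : Qs * Qs⁻¹ = 1 := PowerSeries.mul_inv_cancel _ hQs0
  -- coercion to Laurent series
  have hQL : ((Qs : LaurentSeries ℂ))⁻¹ = ((Qs⁻¹ : PowerSeries ℂ) : LaurentSeries ℂ) := by
    symm
    apply eq_inv_of_mul_eq_one_right
    rw [← PowerSeries.coe_mul, hQsu, PowerSeries.coe_one]
  have hXs : (((X : ℂ[X]) ^ s : ℂ[X]) : PowerSeries ℂ) = (PowerSeries.X : PowerSeries ℂ) ^ s := by
    push_cast
    rfl
  unfold resAt
  rw [map_div₀, map_div₀, RatFunc.laurent_algebraMap, RatFunc.laurent_algebraMap,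
    coeAlgHom_algebraMap, coeAlgHom_algebraMap]
  have htay : taylor b ((X - C b) ^ s * Q) = X ^ s * taylor b Q := by
    rw [taylor_mul, taylor_pow, taylor_X_sub_C]
  rw [htay]
  have hcoe : (((X ^ s * taylor b Q : ℂ[X]) : PowerSeries ℂ) : LaurentSeries ℂ)
      = (HahnSeries.single (1 : ℤ) (1 : ℂ)) ^ s * (Qs : LaurentSeries ℂ) := by
    rw [Polynomial.coe_mul, hXs, PowerSeries.coe_mul, PowerSeries.coe_pow,
      PowerSeries.coe_X]
  rw [hcoe]
  have hsingle : ((HahnSeries.single (1 : ℤ) (1 : ℂ)) ^ s)⁻¹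
      = HahnSeries.single (-(s : ℤ)) (1 : ℂ) := by
    rw [← RatFunc.single_one_eq_pow, HahnSeries.inv_single, inv_one]
  have hQLne : (Qs : LaurentSeries ℂ) ≠ 0 := by
    intro h
    apply hQs0
    have := congrArg (fun (x : LaurentSeries ℂ) => x.coeff (0 : ℤ)) h
    simpa [PowerSeries.coeff_coe, PowerSeries.coeff_zero_eq_constantCoeff_apply] using this
  have hrw : (((taylor b P : ℂ[X]) : PowerSeries ℂ) : LaurentSeries ℂ) /
        ((HahnSeries.single (1 : ℤ) (1 : ℂ)) ^ s * (Qs : LaurentSeries ℂ))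
      = HahnSeries.single (-(s : ℤ)) (1 : ℂ) *
        ((((taylor b P : ℂ[X]) : PowerSeries ℂ) * Qs⁻¹ : PowerSeries ℂ) : LaurentSeries ℂ) := by
    rw [div_eq_mul_inv, mul_inv, hsingle, hQL, PowerSeries.coe_mul]
    ring
  rw [hrw]
  have hm1 : (-1 : ℤ) = ((s : ℤ) - 1) + (-(s : ℤ)) := by ring
  rw [hm1, HahnSeries.coeff_single_mul_add, one_mul]
  rw [PowerSeries.coeff_coe]
  rcases Nat.eq_zero_or_pos s with hs | hs
  · subst hs; norm_num
  · rw [if_neg (by omega : ¬ (s:ℤ) - 1 < 0), if_neg (by omega : ¬ s = 0)]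
    have hnat : ((s : ℤ) - 1).natAbs = s - 1 := by omega
    rw [hnat]


lemma resAt_div_ne (b : ℂ) (P Q : ℂ[X]) (hQ : Q.eval b ≠ 0) :
    resAt b (εp P / εp Q) = 0 := by
  have := resAt_shape b P Q 0 hQ
  simpa using this

lemma resAt_algebraMap (b : ℂ) (P : ℂ[X]) : resAt b (εp P) = 0 := by
  have := resAt_div_ne b P 1 (by simp)
  simpa using this

lemma resAt_simple (b : ℂ) (P Q : ℂ[X]) (hQ : Q.eval b ≠ 0) :
    resAt b (εp P / εp ((X - C b) * Q)) = P.eval b / Q.eval b := by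
  have := resAt_shape b P Q 1 hQ
  rw [pow_one] at this
  rw [this, if_neg one_ne_zero]
  rw [show (1:ℕ) - 1 = 0 from rfl, PowerSeries.coeff_zero_eq_constantCoeff_apply, map_mul,
    constantCoeff_taylor, PowerSeries.constantCoeff_inv, constantCoeff_taylor, div_eq_mul_inv]

lemma resAt_add (b : ℂ) (f g : RatFunc ℂ) : resAt b (f + g) = resAt b f + resAt b g := by
  unfold resAt
  rw [map_add, map_add, HahnSeries.coeff_add]

lemma resAt_C_mul (b : ℂ) (c : ℂ) (f : RatFunc ℂ) :
    resAt b (RatFunc.C c * f) = c * resAt b f := by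
  unfold resAt
  rw [map_mul, RatFunc.laurent_C, map_mul, ← RatFunc.algebraMap_C, coeAlgHom_algebraMap,
    Polynomial.coe_C, PowerSeries.coe_C, HahnSeries.C_apply, HahnSeries.coeff_single_zero_mul]

/-- The residue of the derivative `(A/B)' = (A'B - AB')/B²` vanishes. -/
lemma resAt_deriv (b : ℂ) (A B₁ : ℂ[X]) (s : ℕ) (h1 : B₁.eval b ≠ 0) :
    resAt b (εp (derivative A * ((X - C b) ^ s * B₁) - A * derivative ((X - C b) ^ s * B₁)) /
      εp (((X - C b) ^ s * B₁) ^ 2)) = 0 := by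
  have hsq : ((X - C b) ^ s * B₁) ^ 2 = (X - C b) ^ (2 * s) * B₁ ^ 2 := by ring
  have hB2 : (B₁ ^ 2).eval b ≠ 0 := by
    rw [eval_pow]; exact pow_ne_zero _ h1
  rw [hsq, resAt_shape _ _ _ _ hB2]
  rcases Nat.eq_zero_or_pos s with hs | hs
  · simp [hs]
  obtain ⟨r, rfl⟩ : ∃ r, s = r + 1 := ⟨s - 1, by omega⟩
  rw [if_neg (by omega)]
  -- power series setup
  set q : PowerSeries ℂ := ((taylor b B₁ : ℂ[X]) : PowerSeries ℂ) with hqdef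
  have hq0 : PowerSeries.constantCoeff q ≠ 0 := by
    rw [hqdef, constantCoeff_taylor]; exact h1
  set u : PowerSeries ℂ := q⁻¹ with hudef
  have hqu : q * u = 1 := PowerSeries.mul_inv_cancel _ hq0
  set p : PowerSeries ℂ := ((taylor b A : ℂ[X]) : PowerSeries ℂ) with hpdef
  set pd : PowerSeries ℂ := ((derivative (taylor b A) : ℂ[X]) : PowerSeries ℂ) with hpddef
  set qd : PowerSeries ℂ := ((derivative (taylor b B₁) : ℂ[X]) : PowerSeries ℂ) with hqddef
  -- inverse of the square
  have hinvsq : (((taylor b (B₁ ^ 2) : ℂ[X]) : PowerSeries ℂ))⁻¹ = u ^ 2 := by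
    rw [taylor_pow, Polynomial.coe_pow, sq, sq, PowerSeries.mul_inv_rev, ← hqdef, ← hudef]
  -- the taylor shift of the numerator
  have hnum : ((taylor b (derivative A * ((X - C b) ^ (r+1) * B₁) -
        A * derivative ((X - C b) ^ (r+1) * B₁)) : ℂ[X]) : PowerSeries ℂ)
      = pd * (PowerSeries.X ^ (r+1) * q) -
        p * (PowerSeries.C ((r:ℂ)+1) * PowerSeries.X ^ r * q + PowerSeries.X ^ (r+1) * qd) := by
    have hd : derivative ((X - C b) ^ (r+1) * B₁)
        = C ((r:ℂ)+1) * (X - C b) ^ r * B₁ + (X - C b) ^ (r+1) * derivative B₁ := by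
      rw [derivative_mul, derivative_pow]
      simp only [derivative_X_sub_C, Nat.add_sub_cancel, mul_one]
      push_cast
      ring
    simp only [hd, map_sub, map_add, taylor_mul, taylor_pow, taylor_X_sub_C,
      taylor_derivative, taylor_C, taylor_X]
    push_cast [Polynomial.coe_sub, Polynomial.coe_add, Polynomial.coe_mul, Polynomial.coe_pow,
      Polynomial.coe_X, Polynomial.coe_C]
    ring
  rw [hinvsq, hnum]
  -- derivative facts
  have hpd : PowerSeries.derivativeFun p = pd := by
    rw [hpdef, hpddef, ← PowerSeries.derivative_coe]; rfl
  have hqd : PowerSeries.derivativeFun q = qd := by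
    rw [hqdef, hqddef, ← PowerSeries.derivative_coe]; rfl
  have h0 : q * PowerSeries.derivativeFun u + u * PowerSeries.derivativeFun q = 0 := by
    have h := PowerSeries.derivativeFun_mul q u
    rw [hqu, PowerSeries.derivativeFun_one] at h
    rw [smul_eq_mul, smul_eq_mul] at h
    linear_combination -h
  rw [hqd] at h0
  have hu' : PowerSeries.derivativeFun u = -(u ^ 2 * qd) := by
    linear_combination u * h0 - PowerSeries.derivativeFun u * hqu
  have hH : PowerSeries.derivativeFun (p * u) = pd * u - p * (u ^ 2 * qd) := by
    rw [PowerSeries.derivativeFun_mul, smul_eq_mul, smul_eq_mul, hu', hpd]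
    ring
  have E1 : (pd * (PowerSeries.X ^ (r+1) * q) -
        p * (PowerSeries.C ((r:ℂ)+1) * PowerSeries.X ^ r * q + PowerSeries.X ^ (r+1) * qd)) *
        u ^ 2
      = PowerSeries.X ^ r * (PowerSeries.X * PowerSeries.derivativeFun (p * u) -
          PowerSeries.C ((r:ℂ)+1) * (p * u)) := by
    rw [hH]
    linear_combination (u * (pd * PowerSeries.X ^ (r+1) -
      PowerSeries.C ((r:ℂ)+1) * PowerSeries.X ^ r * p)) * hqu
  rw [E1]
  have hidx : 2 * (r + 1) - 1 = (r + 1) + r := by omega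
  rw [hidx, PowerSeries.coeff_X_pow_mul]
  rw [map_sub, PowerSeries.coeff_succ_X_mul,
    show PowerSeries.derivativeFun (p * u) = PowerSeries.derivative ℂ (p * u) from rfl,
    PowerSeries.coeff_derivativeFun,
    PowerSeries.coeff_C_mul]
  ring
lemma Res_def (n : ℕ) (a : ℕ → ℂ) (f : RatFunc ℂ) :
    Res n a f = ∑ i ∈ Finset.range n, resAt (a i) f := rfl

lemma Res_add (n : ℕ) (a : ℕ → ℂ) (f g : RatFunc ℂ) :
    Res n a (f + g) = Res n a f + Res n a g := by
  simp only [Res_def, resAt_add, Finset.sum_add_distrib]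

lemma Res_C_mul (n : ℕ) (a : ℕ → ℂ) (c : ℂ) (f : RatFunc ℂ) :
    Res n a (RatFunc.C c * f) = c * Res n a f := by
  simp only [Res_def, resAt_C_mul, Finset.mul_sum]

/-- The classical identity `∑ i, P(v i) / ∏_{j ≠ i} (v i - v j) = 0` for `deg P ≤ #s - 2`. -/
lemma sum_eval_nodalWeight {ι : Type*} [DecidableEq ι] (s : Finset ι) (v : ι → ℂ)
    (hvs : Set.InjOn v s) (P : ℂ[X]) (hdeg : P.degree < ((s.card - 1 : ℕ) : WithBot ℕ)) :
    ∑ i ∈ s, P.eval (v i) * Lagrange.nodalWeight s v i = 0 := by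
  rcases s.eq_empty_or_nonempty with h | h
  · simp [h]
  have hP : P = Lagrange.interpolate s v fun i => P.eval (v i) :=
    Lagrange.eq_interpolate hvs (lt_of_lt_of_le hdeg (by exact_mod_cast Nat.sub_le _ _))
  have h0 : P.coeff (s.card - 1) = 0 := coeff_eq_zero_of_degree_lt hdeg
  have hcoeff : P.coeff (s.card - 1)
      = ∑ i ∈ s, P.eval (v i) * (Lagrange.basis s v i).coeff (s.card - 1) := by
    conv_lhs => rw [hP]
    rw [Lagrange.interpolate_apply, Polynomial.finset_sum_coeff]
    exact Finset.sum_congr rfl fun i _ => by rw [Polynomial.coeff_C_mul]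
  have hb : ∀ i ∈ s, (Lagrange.basis s v i).coeff (s.card - 1) = Lagrange.nodalWeight s v i := by
    intro i hi
    have hnd := Lagrange.natDegree_basis hvs hi
    rw [← hnd, Polynomial.coeff_natDegree, Lagrange.basis, Polynomial.leadingCoeff_prod,
      Lagrange.nodalWeight]
    refine Finset.prod_congr rfl fun j _ => ?_
    rw [Lagrange.basisDivisor, Polynomial.leadingCoeff_mul, Polynomial.leadingCoeff_C,
      (Polynomial.monic_X_sub_C (v j)).leadingCoeff, mul_one]
  calc ∑ i ∈ s, P.eval (v i) * Lagrange.nodalWeight s v i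
      = ∑ i ∈ s, P.eval (v i) * (Lagrange.basis s v i).coeff (s.card - 1) :=
        Finset.sum_congr rfl fun i hi => by rw [hb i hi]
    _ = P.coeff (s.card - 1) := hcoeff.symm
    _ = 0 := h0


lemma eval_nodal_erase_ne_zero (hdist : Set.InjOn a (Finset.range n)) {i : ℕ}
    (hi : i ∈ Finset.range n) :
    (Lagrange.nodal ((Finset.range n).erase i) a).eval (a i) ≠ 0 := by
  rw [Lagrange.eval_nodal]
  refine Finset.prod_ne_zero_iff.2 fun j hj => sub_ne_zero.2 fun hij => ?_
  obtain ⟨hji, hjr⟩ := Finset.mem_erase.1 hj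
  exact hji (hdist hjr hi hij.symm)

lemma Res_main (hdist : Set.InjOn a (Finset.range n)) :
    ∀ M : ℕ, 1 ≤ M → ∀ P : ℂ[X],
      P.degree < ((M * n - 1 : ℕ) : WithBot ℕ) →
      Res n a (εp P / εp (Lagrange.nodal (Finset.range n) a) ^ M) = 0 := by
  intro M hM
  induction M, hM using Nat.le_induction with
  | base =>
    intro P hdeg
    set Φ := Lagrange.nodal (Finset.range n) a with hΦdef
    have hstep : ∀ i ∈ Finset.range n,
        resAt (a i) (εp P / εp Φ ^ 1)
          = P.eval (a i) * Lagrange.nodalWeight (Finset.range n) a i := by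
      intro i hi
      rw [pow_one, hΦdef, Lagrange.nodal_eq_mul_nodal_erase hi,
        resAt_simple _ _ _ (eval_nodal_erase_ne_zero n a hdist hi),
        Lagrange.eval_nodal, div_eq_mul_inv, ← Finset.prod_inv_distrib,
        Lagrange.nodalWeight]
    rw [Res_def, Finset.sum_congr rfl hstep]
    apply sum_eval_nodalWeight _ _ hdist
    rw [Finset.card_range]
    rwa [one_mul] at hdeg
  | succ m hm IH =>
    intro P hdeg
    rcases Nat.eq_zero_or_pos n with hn | hn
    · subst hn; simp [Res_def]
    obtain ⟨k, rfl⟩ : ∃ k, m = k + 1 := ⟨m - 1, by omega⟩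
    set Φ := Lagrange.nodal (Finset.range n) a with hΦdef
    have hΦmonic : Φ.Monic := Lagrange.nodal_monic
    have hΦ0 : Φ ≠ 0 := Lagrange.nodal_ne_zero
    have hΦnd : Φ.natDegree = n := by rw [hΦdef, Lagrange.natDegree_nodal, Finset.card_range]
    have hεΦ : εp Φ ≠ 0 := RatFunc.algebraMap_ne_zero hΦ0
    have hsep : Φ.Separable := by
      rw [hΦdef, Lagrange.nodal_eq]
      exact Polynomial.separable_prod_X_sub_C_iff'.2 fun x hx y hy h => hdist hx hy h
    obtain ⟨U, V, hUV⟩ := hsep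
    obtain ⟨Q, R, hPQR, hQnd⟩ : ∃ Q R : ℂ[X],
        P = Q * derivative Φ + Φ * R ∧ Q.natDegree ≤ n - 1 := by
      refine ⟨(P * V) %ₘ Φ, P * U + ((P * V) /ₘ Φ) * derivative Φ, ?_, ?_⟩
      · have hm' := Polynomial.modByMonic_add_div (P * V) Φ
        linear_combination (-(derivative Φ)) * hm' - P * hUV
      · by_cases hQ0 : (P * V) %ₘ Φ = 0
        · simp [hQ0]
        · have h2 := Polynomial.natDegree_lt_natDegree hQ0
            (Polynomial.degree_modByMonic_lt _ hΦmonic)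
          rw [hΦnd] at h2
          omega
    -- arithmetic helpers
    have e1 : (k + 1 + 1) * n = k * n + n + n := by ring
    have e2 : (k + 1) * n = k * n + n := by ring
    have hPnd : P.natDegree ≤ k * n + n + n - 2 := by
      by_cases hP0 : P = 0
      · simp [hP0]
      have h3 := (Polynomial.natDegree_lt_iff_degree_lt hP0).2 hdeg
      rw [e1] at h3
      omega
    have hΦ'nd : (derivative Φ).natDegree ≤ n - 1 :=
      (Polynomial.natDegree_derivative_le Φ).trans (by omega)
    have hRdeg : R.degree < (((k + 1) * n - 1 : ℕ) : WithBot ℕ) := by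
      by_cases hR0 : R = 0
      · rw [hR0, Polynomial.degree_zero]; exact WithBot.bot_lt_coe _
      have hmul : Φ * R = P - Q * derivative Φ := by linear_combination -hPQR
      have h1 : (Φ * R).natDegree = n + R.natDegree := by
        rw [Polynomial.natDegree_mul hΦ0 hR0, hΦnd]
      have h2 : (P - Q * derivative Φ).natDegree ≤ max P.natDegree (n - 1 + (n - 1)) :=
        (Polynomial.natDegree_sub_le _ _).trans
          (max_le_max le_rfl ((Polynomial.natDegree_mul_le).trans (by omega)))
      rw [hmul] at h1
      rw [Polynomial.degree_eq_natDegree hR0]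
      have hnd : R.natDegree < (k + 1) * n - 1 := by rw [e2]; omega
      exact_mod_cast hnd
    -- split the fraction
    have hsplit : εp P / εp Φ ^ (k + 1 + 1)
        = εp (Q * derivative Φ) / εp Φ ^ (k + 1 + 1) + εp R / εp Φ ^ (k + 1) := by
      conv_lhs => rw [hPQR]
      simp only [map_add, map_mul, add_div]
      congr 1
      rw [pow_succ, mul_comm (εp Φ) (εp R), mul_div_mul_right _ _ hεΦ]
    rw [hsplit, Res_add]
    have hterm2 : Res n a (εp R / εp Φ ^ (k + 1)) = 0 := IH R hRdeg
    -- the derivative identity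
    have hID : εp (derivative Q) / εp Φ ^ (k + 1)
        = RatFunc.C (((k : ℂ) + 1)) * (εp (Q * derivative Φ) / εp Φ ^ (k + 1 + 1))
          + εp (derivative Q * Φ ^ (k + 1) - Q * derivative (Φ ^ (k + 1)))
            / εp ((Φ ^ (k + 1)) ^ 2) := by
      rw [Polynomial.derivative_pow]
      simp only [map_sub, map_mul, map_pow, Nat.add_sub_cancel, RatFunc.algebraMap_C]
      push_cast
      field_simp
      ring
    have hD0 : Res n a (εp (derivative Q * Φ ^ (k + 1) - Q * derivative (Φ ^ (k + 1)))
        / εp ((Φ ^ (k + 1)) ^ 2)) = 0 := by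
      rw [Res_def]
      refine Finset.sum_eq_zero fun i hi => ?_
      have hfac : Φ ^ (k + 1) = (X - C (a i)) ^ (k + 1)
          * (Lagrange.nodal ((Finset.range n).erase i) a) ^ (k + 1) := by
        rw [hΦdef, Lagrange.nodal_eq_mul_nodal_erase hi, mul_pow]
      rw [hfac]
      refine resAt_deriv (a i) Q _ (k + 1) ?_
      rw [eval_pow]
      exact pow_ne_zero _ (eval_nodal_erase_ne_zero n a hdist hi)
    -- degree bound for `derivative Q`
    have hQ'deg : (derivative Q).degree < (((k + 1) * n - 1 : ℕ) : WithBot ℕ) := by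
      by_cases hQ'0 : derivative Q = 0
      · rw [hQ'0, Polynomial.degree_zero]; exact WithBot.bot_lt_coe _
      have hQn0 : Q.natDegree ≠ 0 := fun h =>
        hQ'0 (Polynomial.derivative_of_natDegree_zero h)
      have hn2 : 2 ≤ n := by omega
      have h4 : (derivative Q).natDegree ≤ Q.natDegree - 1 :=
        Polynomial.natDegree_derivative_le Q
      rw [Polynomial.degree_eq_natDegree hQ'0]
      have : (derivative Q).natDegree < (k + 1) * n - 1 := by rw [e2]; omega
      exact_mod_cast this
    have hQ'0 : Res n a (εp (derivative Q) / εp Φ ^ (k + 1)) = 0 := IH _ hQ'deg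
    have hall := congrArg (Res n a) hID
    rw [Res_add, Res_C_mul, hQ'0, hD0, add_zero] at hall
    have hMne : ((k : ℂ) + 1) ≠ 0 := by
      have h5 : ((k + 1 : ℕ) : ℂ) ≠ 0 := Nat.cast_ne_zero.2 (Nat.succ_ne_zero k)
      push_cast at h5
      exact h5
    have hterm1 : Res n a (εp (Q * derivative Φ) / εp Φ ^ (k + 1 + 1)) = 0 := by
      rcases mul_eq_zero.1 hall.symm with h | h
      · exact absurd h hMne
      · exact h
    rw [hterm1, hterm2, add_zero]

lemma eps_nodal (s : Finset ℕ) :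
    εp (Lagrange.nodal s a) = ∏ j ∈ s, (RatFunc.X - RatFunc.C (a j)) := by
  rw [Lagrange.nodal_eq, map_prod]
  exact Finset.prod_congr rfl fun j _ => by
    rw [map_sub, RatFunc.algebraMap_X, RatFunc.algebraMap_C]

lemma Res_poly (P : ℂ[X]) : Res n a (εp P) = 0 := by
  rw [Res_def]
  exact Finset.sum_eq_zero fun i _ => resAt_algebraMap _ _

lemma Res_zpow_neg (hdist : Set.InjOn a (Finset.range n)) (m : ℕ) (hm : 1 ≤ m) (P : ℂ[X])
    (hdeg : P.degree < ((m * n - 1 : ℕ) : WithBot ℕ)) :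
    Res n a (εp (Lagrange.nodal (Finset.range n) a) ^ (-(m : ℤ)) * εp P) = 0 := by
  have h : (εp (Lagrange.nodal (Finset.range n) a)) ^ (-(m : ℤ)) * εp P
      = εp P / εp (Lagrange.nodal (Finset.range n) a) ^ m := by
    rw [zpow_neg, zpow_natCast, div_eq_mul_inv, mul_comm]
  rw [h]
  exact Res_main n a hdist m hm P hdeg


/-- `Res(φ⁺_{p,i} φ⁻_{q,j} dt) = δ_{p+q,-1} δ_{i+j,n-1}`, and
`Res(φ⁻_{c,i} φ⁻_{d,j} dt) = 0` for `c, d < 0`. -/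
theorem stmt4 (hdist : ∀ i < n, ∀ j < n, a i = a j → i = j) :
    (∀ (p q : ℤ) (i j : ℕ), i < n → j < n →
      Res n a (phiPlus n a p i * phiMinus n a q j) =
        (if p + q = -1 then (1 : ℂ) else 0) * (if i + j = n - 1 then 1 else 0))
    ∧ (∀ (c d : ℤ) (i j : ℕ), c < 0 → d < 0 → i < n → j < n →
      Res n a (phiMinus n a c i * phiMinus n a d j) = 0) := by
  have hinj : Set.InjOn a (Finset.range n) := fun x hx y hy h =>
    hdist x (Finset.mem_range.1 hx) y (Finset.mem_range.1 hy) h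
  have hphi : phi n a = εp (Lagrange.nodal (Finset.range n) a) := by
    rw [phi, eps_nodal]
  have hφ : phi n a ≠ 0 := by
    rw [hphi]; exact RatFunc.algebraMap_ne_zero Lagrange.nodal_ne_zero
  have hdegmul : ∀ s t : Finset ℕ,
      (Lagrange.nodal s a * Lagrange.nodal t a).degree = ((s.card + t.card : ℕ) : WithBot ℕ) := by
    intro s t
    rw [degree_mul, Lagrange.degree_nodal, Lagrange.degree_nodal]
    push_cast
    rfl
  have hcardIco : ∀ j : ℕ, j ≤ n → (Finset.Ico (n - j) n).card = j := by
    intro j hj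
    rw [Nat.card_Ico]
    omega
  constructor
  · intro p q i j hi hj
    have hn1 : 1 ≤ n := by omega
    have hprod : phiPlus n a p i * phiMinus n a q j
        = phi n a ^ (p + q) *
          εp (Lagrange.nodal (Finset.range i) a * Lagrange.nodal (Finset.Ico (n - j) n) a) := by
      rw [phiPlus, phiMinus, map_mul, eps_nodal, eps_nodal, zpow_add₀ hφ]
      ring
    rw [hprod]
    rcases lt_trichotomy (p + q) (-1) with he | he | he
    · -- p + q ≤ -2
      obtain ⟨m, hm2, hpqm⟩ : ∃ m : ℕ, 2 ≤ m ∧ p + q = -(m : ℤ) :=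
        ⟨(-(p + q)).toNat, by omega, by omega⟩
      rw [if_neg (by omega : ¬ p + q = -1), zero_mul, hpqm, hphi]
      apply Res_zpow_neg n a hinj m (by omega)
      rw [hdegmul, Finset.card_range, hcardIco j (by omega)]
      have h2n : 2 * n ≤ m * n := Nat.mul_le_mul_right n hm2
      have hlt : i + j < m * n - 1 := by omega
      exact_mod_cast hlt
    · -- p + q = -1
      rcases lt_trichotomy (i + j) (n - 1) with hij | hij | hij
      · -- i + j < n - 1
        rw [if_neg (by omega : ¬ i + j = n - 1), mul_zero]
        rw [he, show (-1 : ℤ) = -((1 : ℕ) : ℤ) by norm_num, hphi]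
        apply Res_zpow_neg n a hinj 1 le_rfl
        rw [hdegmul, Finset.card_range, hcardIco j (by omega)]
        have hlt : i + j < 1 * n - 1 := by omega
        exact_mod_cast hlt
      · -- i + j = n - 1
        have hnj : n - j = i + 1 := by omega
        have hΦsplit : Lagrange.nodal (Finset.range n) a
            = (X - C (a i)) * (Lagrange.nodal (Finset.range i) a *
              Lagrange.nodal (Finset.Ico (n - j) n) a) := by
          rw [Lagrange.nodal_eq, Lagrange.nodal_eq, Lagrange.nodal_eq, hnj]
          rw [← Finset.prod_range_mul_prod_Ico _ (by omega : i + 1 ≤ n),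
            Finset.prod_range_succ]
          ring
        have hPP0 : εp (Lagrange.nodal (Finset.range i) a *
            Lagrange.nodal (Finset.Ico (n - j) n) a) ≠ 0 :=
          RatFunc.algebraMap_ne_zero (mul_ne_zero Lagrange.nodal_ne_zero Lagrange.nodal_ne_zero)
        have hred : phi n a ^ (p + q) *
            εp (Lagrange.nodal (Finset.range i) a * Lagrange.nodal (Finset.Ico (n - j) n) a)
            = εp 1 / εp ((X - C (a i)) * 1) := by
          rw [he, hphi, zpow_neg_one, hΦsplit, map_mul, map_one, mul_one]
          rw [mul_inv, mul_assoc, inv_mul_cancel₀ hPP0, mul_one, one_div]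
        rw [hred, Res_def]
        rw [Finset.sum_eq_single_of_mem i (Finset.mem_range.2 hi)]
        · rw [resAt_simple _ _ _ (by simp : (1 : ℂ[X]).eval (a i) ≠ 0)]
          rw [if_pos he, if_pos hij]
          simp
        · intro l hl hli
          rw [resAt_div_ne]
          rw [eval_mul, eval_one, mul_one, eval_sub, eval_X, eval_C]
          refine sub_ne_zero.2 fun hc => ?_
          exact hli (hdist l (Finset.mem_range.1 hl) i hi hc)
      · -- i + j ≥ n
        have hred : phi n a ^ (p + q) *
            εp (Lagrange.nodal (Finset.range i) a * Lagrange.nodal (Finset.Ico (n - j) n) a)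
            = εp (Lagrange.nodal (Finset.Ico (n - j) i) a) := by
          have hsplit : Lagrange.nodal (Finset.range i) a *
              Lagrange.nodal (Finset.Ico (n - j) n) a
              = Lagrange.nodal (Finset.range n) a * Lagrange.nodal (Finset.Ico (n - j) i) a := by
            rw [Lagrange.nodal_eq, Lagrange.nodal_eq, Lagrange.nodal_eq, Lagrange.nodal_eq]
            rw [← Finset.prod_range_mul_prod_Ico _ (by omega : n - j ≤ i),
              ← Finset.prod_range_mul_prod_Ico _ (by omega : n - j ≤ n)]
            ring
          rw [he, hphi, zpow_neg_one, hsplit, map_mul]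
          rw [inv_mul_cancel_left₀ (RatFunc.algebraMap_ne_zero Lagrange.nodal_ne_zero)]
        rw [hred, Res_poly, if_neg (show ¬ i + j = n - 1 by omega), mul_zero]
    · -- p + q ≥ 0
      obtain ⟨t, hpt⟩ : ∃ t : ℕ, p + q = (t : ℤ) := ⟨(p + q).toNat, by omega⟩
      rw [if_neg (show ¬ p + q = -1 by omega), zero_mul, hpt, hphi, zpow_natCast, ← map_pow, ← map_mul, Res_poly]
  · intro c d i j hc hd hi hj
    have hprod : phiMinus n a c i * phiMinus n a d j
        = phi n a ^ (c + d) *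
          εp (Lagrange.nodal (Finset.Ico (n - i) n) a *
            Lagrange.nodal (Finset.Ico (n - j) n) a) := by
      rw [phiMinus, phiMinus, map_mul, eps_nodal, eps_nodal, zpow_add₀ hφ]
      ring
    obtain ⟨m, hm2, hpqm⟩ : ∃ m : ℕ, 2 ≤ m ∧ c + d = -(m : ℤ) :=
      ⟨(-(c + d)).toNat, by omega, by omega⟩
    rw [hprod, hpqm, hphi]
    apply Res_zpow_neg n a hinj m (by omega)
    rw [hdegmul, hcardIco i (by omega), hcardIco j (by omega)]
    have h2n : 2 * n ≤ m * n := Nat.mul_le_mul_right n hm2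
    have hlt : i + j < m * n - 1 := by omega
    exact_mod_cast hlt

end

end Stmt4
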